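/- Suppose there is n̄ ∈ ℕ such that for all n ≥ n̄, Ω_{n+1} ⊆ Ω_n and Ỹ_n ⊆ Ỹ_{n+1}. Then for all n ≥ n̄, Õ_{∞,n} ⊆ Õ_{∞,n+1}. -/

import Mathlib

open Matrix Pointwise Filter

/-- Pontryagin difference of sets: `A ⊖ B = {z | z + v ∈ A for all v ∈ B}`. -/
def pDiff {d : ℕ} (A B : Set (Fin d → ℝ)) : Set (Fin d → ℝ) :=
  {z | ∀ v ∈ B, z + v ∈ A}

/-- `ℰˣ(n,k) = ⊕_{i=0}^{k-1} (A_cl^{k-1-i} B_w)·Ω_{n+i}` (Minkowski sum of linear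
images), with the empty sum `ℰˣ(n,0) = {0}`. -/
def calEx {nx ne : ℕ} (Acl : Matrix (Fin nx) (Fin nx) ℝ)
    (Bw : Matrix (Fin nx) (Fin ne) ℝ) (Ω : ℕ → Set (Fin ne → ℝ)) (n k : ℕ) :
    Set (Fin nx → ℝ) :=
  ∑ i ∈ Finset.range k, (Acl ^ (k - 1 - i) * Bw).mulVec '' Ω (n + i)

/-- `ℰʸ(n,k) = D_w·Ω_{n+k} ⊕ C_cl·ℰˣ(n,k)`. -/
def calEy {nx ne ny : ℕ} (Acl : Matrix (Fin nx) (Fin nx) ℝ)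
    (Bw : Matrix (Fin nx) (Fin ne) ℝ) (Ccl : Matrix (Fin ny) (Fin nx) ℝ)
    (Dw : Matrix (Fin ny) (Fin ne) ℝ) (Ω : ℕ → Set (Fin ne → ℝ)) (n k : ℕ) :
    Set (Fin ny → ℝ) :=
  Dw.mulVec '' Ω (n + k) + Ccl.mulVec '' calEx Acl Bw Ω n k

/-- `Y_{cl,n,k} = Y_cl ⊖ ℰʸ(n,k)`. -/
def Yclset {nx ne ny : ℕ} (Acl : Matrix (Fin nx) (Fin nx) ℝ)
    (Bw : Matrix (Fin nx) (Fin ne) ℝ) (Ccl : Matrix (Fin ny) (Fin nx) ℝ)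
    (Dw : Matrix (Fin ny) (Fin ne) ℝ) (Ycl : Set (Fin ny → ℝ))
    (Ω : ℕ → Set (Fin ne → ℝ)) (n k : ℕ) : Set (Fin ny → ℝ) :=
  pDiff Ycl (calEy Acl Bw Ccl Dw Ω n k)

/-- `H^y_k = D_cl + C_cl (I − A_cl)⁻¹ (I − A_cl^k) B_cl`. -/
noncomputable def Hy {nx nv ny : ℕ} (Acl : Matrix (Fin nx) (Fin nx) ℝ)
    (Bcl : Matrix (Fin nx) (Fin nv) ℝ) (Ccl : Matrix (Fin ny) (Fin nx) ℝ)
    (Dcl : Matrix (Fin ny) (Fin nv) ℝ) (k : ℕ) : Matrix (Fin ny) (Fin nv) ℝ :=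
  Dcl + Ccl * (1 - Acl)⁻¹ * (1 - Acl ^ k) * Bcl

/-- `H^y_∞ = D_cl + C_cl (I − A_cl)⁻¹ B_cl`. -/
noncomputable def Hyinf {nx nv ny : ℕ} (Acl : Matrix (Fin nx) (Fin nx) ℝ)
    (Bcl : Matrix (Fin nx) (Fin nv) ℝ) (Ccl : Matrix (Fin ny) (Fin nx) ℝ)
    (Dcl : Matrix (Fin ny) (Fin nv) ℝ) : Matrix (Fin ny) (Fin nv) ℝ :=
  Dcl + Ccl * (1 - Acl)⁻¹ * Bcl

/-- `Õ_{∞,n} = {(v, x̂) : H^y_∞ v ∈ Ỹ_n and H^y_k v + C_cl A_cl^k x̂ ∈ Y_{cl,n,k} ∀k}`. -/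
def Otilde {nx nv ne ny : ℕ} (Acl : Matrix (Fin nx) (Fin nx) ℝ)
    (Bcl : Matrix (Fin nx) (Fin nv) ℝ) (Bw : Matrix (Fin nx) (Fin ne) ℝ)
    (Ccl : Matrix (Fin ny) (Fin nx) ℝ) (Dcl : Matrix (Fin ny) (Fin nv) ℝ)
    (Dw : Matrix (Fin ny) (Fin ne) ℝ) (Ycl : Set (Fin ny → ℝ))
    (Ω : ℕ → Set (Fin ne → ℝ)) (Ytil : ℕ → Set (Fin ny → ℝ)) (n : ℕ) :
    Set ((Fin nv → ℝ) × (Fin nx → ℝ)) :=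
  {p | (Hyinf Acl Bcl Ccl Dcl).mulVec p.1 ∈ Ytil n ∧
       ∀ k : ℕ, (Hy Acl Bcl Ccl Dcl k).mulVec p.1 + (Ccl * Acl ^ k).mulVec p.2 ∈
         Yclset Acl Bw Ccl Dw Ycl Ω n k}

/-- If there is `n̄` such that for all `n ≥ n̄`, `Ω_{n+1} ⊆ Ω_n` and
`Ỹ_n ⊆ Ỹ_{n+1}`, then `Õ_{∞,n} ⊆ Õ_{∞,n+1}` for all `n ≥ n̄`. -/
lemma setSum_subset {ι α : Type*} [AddCommMonoid α] {s : Finset ι} {f g : ι → Set α}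
    (h : ∀ i ∈ s, f i ⊆ g i) : ∑ i ∈ s, f i ⊆ ∑ i ∈ s, g i := by
  induction s using Finset.cons_induction with
  | empty => simp
  | cons a s ha ih =>
    rw [Finset.sum_cons, Finset.sum_cons]
    exact Set.add_subset_add (h a (Finset.mem_cons_self a s))
      (ih fun i hi => h i (Finset.mem_cons_of_mem hi))

theorem stmt_12 {nx nv ne ny : ℕ} (Acl : Matrix (Fin nx) (Fin nx) ℝ)
    (Bcl : Matrix (Fin nx) (Fin nv) ℝ) (Bw : Matrix (Fin nx) (Fin ne) ℝ)
    (Ccl : Matrix (Fin ny) (Fin nx) ℝ) (Dcl : Matrix (Fin ny) (Fin nv) ℝ)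
    (Dw : Matrix (Fin ny) (Fin ne) ℝ) (Ycl : Set (Fin ny → ℝ))
    (Ω : ℕ → Set (Fin ne → ℝ)) (Ytil : ℕ → Set (Fin ny → ℝ))
    (hInv : IsUnit (1 - Acl))
    (nbar : ℕ) (hΩ : ∀ n, nbar ≤ n → Ω (n + 1) ⊆ Ω n)
    (hYtil : ∀ n, nbar ≤ n → Ytil n ⊆ Ytil (n + 1)) :
    ∀ n, nbar ≤ n →
      Otilde Acl Bcl Bw Ccl Dcl Dw Ycl Ω Ytil n ⊆
        Otilde Acl Bcl Bw Ccl Dcl Dw Ycl Ω Ytil (n + 1) := by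
  intro n hn p hp
  have hEx : ∀ k, calEx Acl Bw Ω (n + 1) k ⊆ calEx Acl Bw Ω n k := by
    intro k
    unfold calEx
    apply setSum_subset
    intro i _
    apply Set.image_mono
    have : n + 1 + i = (n + i) + 1 := by ring
    rw [this]
    exact hΩ (n + i) (le_trans hn (Nat.le_add_right n i))
  have hEy : ∀ k, calEy Acl Bw Ccl Dw Ω (n + 1) k ⊆ calEy Acl Bw Ccl Dw Ω n k := by
    intro k
    unfold calEy
    apply Set.add_subset_add
    · apply Set.image_mono
      have : n + 1 + k = (n + k) + 1 := by ring
      rw [this]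
      exact hΩ (n + k) (le_trans hn (Nat.le_add_right n k))
    · exact Set.image_mono (hEx k)
  refine ⟨hYtil n hn hp.1, fun k => ?_⟩
  intro v hv
  exact hp.2 k v (hEy k hv)
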